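/- Exponentiation with evaluation exists in SiLlGrphs: for all simple loopless graphs G and H there exist a simple loopless graph E and a conceptual morphism ev : E ⊓ G → H such that for every simple loopless graph X and every conceptual morphism g : X ⊓ G → H there is a unique conceptual morphism ḡ : X → E satisfying ev ∘ (ḡ × id) = g, where ḡ × id : X ⊓ G → E ⊓ G is the conceptual morphism sending (x, u) to (ḡ x, u). -/

import Mathlib

/-- A conceptual morphism of simple loopless graphs: a vertex map taking
adjacent vertices either to equal vertices (collapsing the edge) or to
adjacent vertices. -/
def IsConceptual {V W : Type} (G : SimpleGraph V) (H : SimpleGraph W)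
    (f : V → W) : Prop :=
  ∀ ⦃u v : V⦄, G.Adj u v → f u = f v ∨ H.Adj (f u) (f v)

/-- The categorical product `G ⊓ H` in **SiLlGrphs**: distinct pairs `(a,b)`
and `(c,d)` are adjacent iff (`a = c` or `a ~ c` in `G`) and (`b = d` or
`b ~ d` in `H`). -/
def cProd {V W : Type} (G : SimpleGraph V) (H : SimpleGraph W) :
    SimpleGraph (V × W) where
  Adj p q := p ≠ q ∧ (p.1 = q.1 ∨ G.Adj p.1 q.1) ∧ (p.2 = q.2 ∨ H.Adj p.2 q.2)
  symm := ⟨by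
    rintro p q ⟨h0, h1, h2⟩
    exact ⟨h0.symm, h1.imp Eq.symm fun a => a.symm, h2.imp Eq.symm fun a => a.symm⟩⟩
  loopless := ⟨fun p h => h.1 rfl⟩

/-- Exponentiation with evaluation exists in **SiLlGrphs**: for all simple
loopless graphs `G`, `H` there are a simple loopless graph `E` and a
conceptual morphism `ev : E ⊓ G → H` such that every conceptual morphism
`g : X ⊓ G → H` factors as `g = ev ∘ (ḡ × id)` for a unique conceptual
morphism `ḡ : X → E`. -/
theorem exponentiation_SiLlGrphs {VG VH : Type} (G : SimpleGraph VG)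
    (H : SimpleGraph VH) :
    ∃ (VE : Type) (E : SimpleGraph VE) (ev : VE × VG → VH),
      IsConceptual (cProd E G) H ev ∧
      ∀ (VX : Type) (X : SimpleGraph VX) (g : VX × VG → VH),
        IsConceptual (cProd X G) H g →
        ∃! gb : VX → VE, IsConceptual X E gb ∧
          ev ∘ (fun p : VX × VG => (gb p.1, p.2)) = g := by
  classical
  refine ⟨{f : VG → VH // IsConceptual G H f},
    { Adj := fun f g => f ≠ g ∧ ∀ u v : VG, (u = v ∨ G.Adj u v) →
        f.1 u = g.1 v ∨ H.Adj (f.1 u) (g.1 v)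
      symm := ⟨by
        rintro f g ⟨hne, h⟩
        refine ⟨hne.symm, fun u v huv => ?_⟩
        rcases h v u (huv.imp Eq.symm fun a => a.symm) with h' | h'
        · exact Or.inl h'.symm
        · exact Or.inr h'.symm⟩
      loopless := ⟨fun f h => h.1 rfl⟩ },
    fun p => p.1.1 p.2, ?_, ?_⟩
  · rintro ⟨f, u⟩ ⟨g, v⟩ ⟨hne, h1, h2⟩
    rcases h1 with h1 | h1
    · subst h1
      rcases h2 with h2 | h2
      · exact Or.inl (by simp only at h2 ⊢; rw [h2])
      · exact f.2 h2
    · exact h1.2 u v h2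
  · intro VX X g hg
    refine ⟨fun x => ⟨fun u => g (x, u), fun u v huv => ?_⟩, ⟨?_, ?_⟩, ?_⟩
    · exact hg ⟨by simp [Prod.ext_iff, huv.ne], Or.inl rfl, Or.inr huv⟩
    · intro x y hxy
      by_cases heq : (fun u => g (x, u)) = fun u => g (y, u)
      · exact Or.inl (Subtype.ext heq)
      · refine Or.inr ⟨fun h => heq (congrArg Subtype.val h), fun u v huv => ?_⟩
        exact hg ⟨by simp [Prod.ext_iff, hxy.ne], Or.inr hxy, huv⟩
    · funext p; rfl
    · rintro gb ⟨-, hcomm⟩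
      funext x
      exact Subtype.ext (funext fun u => congrFun hcomm (x, u))
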